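/- Let H₀ ≥ 0 be a self-adjoint operator on a Hilbert space H with one-dimensional kernel spanned by a unit vector Ω, and suppose spec(H₀) ⊂ {0} ∪ [γ, ∞) for some γ > 0. Let V be a bounded self-adjoint operator satisfying the form bound |⟨ψ, Vψ⟩| ≤ β ⟨ψ, H₀ψ⟩ for all ψ ∈ dom(H₀), with 0 ≤ β < 1, and ⟨Ω, VΩ⟩ = 0. Then, setting E = inf spec(H₀ + V), one has spec(H₀ + V) ⊂ {E} ∪ [E + (1-β)γ, ∞), i.e. the gap of H₀ + V above its ground state energy is at least (1-β)γ. Moreover E ≤ 0. -/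

import Mathlib

open scoped InnerProductSpace

section SpectralGapAux

variable {H : Type*} [NormedAddCommGroup H] [InnerProductSpace ℂ H] [CompleteSpace H]

lemma aux_symm {A : H →L[ℂ] H} (hA : IsSelfAdjoint A) (x y : H) :
    ⟪A x, y⟫_ℂ = ⟪x, A y⟫_ℂ :=
  (ContinuousLinearMap.isSelfAdjoint_iff_isSymmetric.mp hA) x y

lemma aux_re_inner_nonneg {A : H →L[ℂ] H} (hA : 0 ≤ A) (x : H) :
    0 ≤ (⟪x, A x⟫_ℂ).re := by
  have := ((ContinuousLinearMap.nonneg_iff_isPositive A).mp hA).inner_nonneg_right x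
  exact (Complex.nonneg_iff.mp this).1

lemma aux_bridge (A : H →L[ℂ] H) (hA : IsSelfAdjoint A) (x : ℝ) :
    (x : ℂ) ∈ spectrum ℂ A ↔ x ∈ spectrum ℝ A := by
  rw [← hA.spectrumRestricts.algebraMap_image]
  constructor
  · rintro ⟨s, hs, hst⟩
    have hsx : s = x := by simpa [Complex.ofReal_inj] using hst
    exact hsx ▸ hs
  · intro h
    exact ⟨x, h, rfl⟩


/-- Gap for H₀ on the orthogonal complement of Ω. -/
lemma aux_gap (H₀ : H →L[ℂ] H) (γ : ℝ) (Ω : H)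
    (hH₀sa : IsSelfAdjoint H₀)
    (hker : LinearMap.ker (H₀ : H →ₗ[ℂ] H) = Submodule.span ℂ {Ω})
    (hγ : 0 < γ)
    (hspecR : ∀ t ∈ spectrum ℝ H₀, t = 0 ∨ γ ≤ t)
    (ψ : H) (hψ : ⟪Ω, ψ⟫_ℂ = 0) :
    γ * ‖ψ‖ ^ 2 ≤ (⟪ψ, H₀ ψ⟫_ℂ).re := by
  set f : ℝ → ℝ := fun t => min 1 (max 0 (t / γ)) with hfdef
  have hfc : Continuous f := by fun_prop
  have hf0 : f 0 = 0 := by simp [hfdef]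
  have hf1 : ∀ t, γ ≤ t → f t = 1 := by
    intro t ht
    have h1 : (1 : ℝ) ≤ t / γ := (one_le_div hγ).mpr ht
    simp [hfdef, max_eq_right (le_trans zero_le_one h1), min_eq_left h1]
  set P : H →L[ℂ] H := cfc f H₀ with hPdef
  -- H₀ - γ • P ≥ 0
  have key1 : (0 : H →L[ℂ] H) ≤ H₀ - γ • P := by
    have : H₀ - γ • P = cfc (fun t => t - γ • f t) H₀ := by
      rw [cfc_sub (fun t : ℝ => t) (fun t => γ • f t) H₀ (by fun_prop) (by exact (hfc.const_smul γ).continuousOn), cfc_id' ℝ H₀, cfc_smul γ f H₀ hfc.continuousOn]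
    rw [this]
    apply cfc_nonneg
    intro t ht
    rcases hspecR t ht with h | h
    · simp [h, hf0]
    · simp [hf1 t h, smul_eq_mul, sub_nonneg, h]
  -- H₀ - H₀ * P = 0
  have key2 : H₀ - H₀ * P = 0 := by
    have h1 : H₀ - H₀ * P = cfc (fun t : ℝ => t - t * f t) H₀ := by
      rw [cfc_sub (fun t : ℝ => t) (fun t => t * f t) H₀ (by fun_prop)
          (by exact (continuous_id.mul hfc).continuousOn),
        cfc_mul (fun t : ℝ => t) f H₀ (by fun_prop) hfc.continuousOn, cfc_id' ℝ H₀]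
    rw [h1, ← cfc_zero ℝ H₀]
    apply cfc_congr
    intro t ht
    rcases hspecR t ht with h | h
    · simp [h]
    · simp [hf1 t h]
  -- ψ - P ψ ∈ ker H₀ = span Ω
  have hker' : ψ - P ψ ∈ Submodule.span ℂ {Ω} := by
    rw [← hker, LinearMap.mem_ker]
    have h := congrArg (fun A : H →L[ℂ] H => A ψ) key2
    simp only [ContinuousLinearMap.sub_apply, ContinuousLinearMap.mul_apply,
      ContinuousLinearMap.zero_apply] at h
    show H₀ (ψ - P ψ) = 0
    rw [map_sub]
    exact h
  obtain ⟨c, hc⟩ := Submodule.mem_span_singleton.mp hker'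
  have hinner : ⟪ψ, P ψ⟫_ℂ = ⟪ψ, ψ⟫_ℂ := by
    have h1 : ⟪ψ, ψ - P ψ⟫_ℂ = 0 := by
      rw [← hc, inner_smul_right]
      have h2 : ⟪ψ, Ω⟫_ℂ = 0 := by
        rw [← inner_conj_symm, hψ, map_zero]
      rw [h2, mul_zero]
    rw [inner_sub_right] at h1
    exact (sub_eq_zero.mp h1).symm
  have hpos := aux_re_inner_nonneg key1 ψ
  have hsm : ((H₀ - γ • P) ψ) = H₀ ψ - γ • P ψ := rfl
  rw [hsm, inner_sub_right] at hpos
  have h2 : ⟪ψ, γ • P ψ⟫_ℂ = (γ : ℂ) * ⟪ψ, ψ⟫_ℂ := by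
    rw [← Complex.coe_smul, inner_smul_right, hinner]
  rw [h2] at hpos
  have hns : (⟪ψ, ψ⟫_ℂ).re = ‖ψ‖ ^ 2 := by
    have h3 := inner_self_eq_norm_sq (𝕜 := ℂ) ψ
    simpa [RCLike.re_to_complex] using h3
  simp only [RCLike.re_to_complex, Complex.sub_re, Complex.mul_re, Complex.ofReal_re,
    Complex.ofReal_im, zero_mul, sub_zero, hns] at hpos
  linarith

/-- Rayleigh quotient bound. -/
lemma aux_rayleigh (T : H →L[ℂ] H) (hT : IsSelfAdjoint T) (g : ℝ → ℝ) (hg : Continuous g)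
    (μ : ℝ) (hμ : ∀ s ∈ spectrum ℝ T, g s * s * g s ≤ μ * (g s * g s))
    (χ : H) : (⟪cfc g T χ, T (cfc g T χ)⟫_ℂ).re ≤ μ * ‖cfc g T χ‖ ^ 2 := by
  set Q : H →L[ℂ] H := cfc g T with hQdef
  have hQsa : IsSelfAdjoint Q := cfc_predicate g T
  have key : (0 : H →L[ℂ] H) ≤ μ • (Q * Q) - Q * (T * Q) := by
    have h1 : Q * Q = cfc (fun s => g s * g s) T := (cfc_mul g g T).symm
    have h2 : Q * (T * Q) = cfc (fun s => g s * (s * g s)) T := by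
      rw [cfc_mul g (fun s => s * g s) T hg.continuousOn
          (by exact (continuous_id.mul hg).continuousOn),
        cfc_mul (fun s : ℝ => s) g T (by fun_prop) hg.continuousOn, cfc_id' ℝ T hT]
    have h3 : μ • (Q * Q) - Q * (T * Q)
        = cfc (fun s => μ • (g s * g s) - g s * (s * g s)) T := by
      rw [cfc_sub (fun s => μ • (g s * g s)) (fun s => g s * (s * g s)) T
          (by exact ((hg.mul hg).const_smul μ).continuousOn)
          (by exact (hg.mul (continuous_id.mul hg)).continuousOn),
        cfc_smul μ (fun s => g s * g s) T (by exact (hg.mul hg).continuousOn), h1, h2]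
    rw [h3]
    apply cfc_nonneg
    intro s hs
    have := hμ s hs
    simp only [smul_eq_mul, sub_nonneg]
    nlinarith [this]
  have hpos := aux_re_inner_nonneg key χ
  have happ : (μ • (Q * Q) - Q * (T * Q)) χ = μ • Q (Q χ) - Q (T (Q χ)) := rfl
  rw [happ, inner_sub_right] at hpos
  have e1 : ⟪χ, μ • Q (Q χ)⟫_ℂ = (μ : ℂ) * ⟪Q χ, Q χ⟫_ℂ := by
    rw [← Complex.coe_smul, inner_smul_right, ← aux_symm hQsa]
  have e2 : ⟪χ, Q (T (Q χ))⟫_ℂ = ⟪Q χ, T (Q χ)⟫_ℂ := by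
    rw [← aux_symm hQsa]
  rw [e1, e2] at hpos
  have hns : (⟪Q χ, Q χ⟫_ℂ).re = ‖Q χ‖ ^ 2 := by
    have h3 := inner_self_eq_norm_sq (𝕜 := ℂ) (Q χ)
    simpa [RCLike.re_to_complex] using h3
  simp only [Complex.sub_re, Complex.mul_re, Complex.ofReal_re, Complex.ofReal_im,
    zero_mul, sub_zero, hns] at hpos
  linarith

/-- Quadratic form bound for combinations of two "orthogonal" vectors. -/
lemma aux_combo (T : H →L[ℂ] H) (x y : H) (μ : ℝ)
    (hxy : ⟪x, y⟫_ℂ = 0) (hTxy : ⟪x, T y⟫_ℂ = 0) (hTyx : ⟪y, T x⟫_ℂ = 0)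
    (hx : (⟪x, T x⟫_ℂ).re ≤ μ * ‖x‖ ^ 2) (hy : (⟪y, T y⟫_ℂ).re ≤ μ * ‖y‖ ^ 2)
    (a b : ℂ) :
    (⟪a • x + b • y, T (a • x + b • y)⟫_ℂ).re ≤ μ * ‖a • x + b • y‖ ^ 2 := by
  have hexp : ⟪a • x + b • y, T (a • x + b • y)⟫_ℂ
      = (starRingEnd ℂ a) * a * ⟪x, T x⟫_ℂ + (starRingEnd ℂ b) * b * ⟪y, T y⟫_ℂ := by
    simp only [map_add, map_smul, inner_add_left, inner_add_right, inner_smul_left,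
      inner_smul_right, hTxy, hTyx, mul_zero, add_zero, zero_add]
    ring
  have hnorm : ‖a • x + b • y‖ ^ 2 = ‖a‖ ^ 2 * ‖x‖ ^ 2 + ‖b‖ ^ 2 * ‖y‖ ^ 2 := by
    have horth : ⟪a • x, b • y⟫_ℂ = 0 := by
      rw [inner_smul_left, inner_smul_right, hxy]; ring
    have := norm_add_sq (𝕜 := ℂ) (a • x) (b • y)
    rw [horth] at this
    simpa [norm_smul, mul_pow] using this
  have hca : ∀ c : ℂ, (starRingEnd ℂ c) * c = ((‖c‖ ^ 2 : ℝ) : ℂ) := by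
    intro c
    rw [mul_comm, Complex.mul_conj]
    norm_cast
    simp [Complex.normSq_eq_norm_sq]
  rw [hexp, hnorm, hca a, hca b]
  simp only [Complex.add_re, Complex.mul_re, Complex.ofReal_re, Complex.ofReal_im, zero_mul,
    sub_zero]
  nlinarith [sq_nonneg ‖a‖, sq_nonneg ‖b‖, sq_nonneg ‖x‖, sq_nonneg ‖y‖]

end SpectralGapAux


set_option maxHeartbeats 2000000 in
/-- Gap stability under a form-bounded perturbation: if `H₀ ≥ 0` has one-dimensional
kernel `ℂΩ` and `spec(H₀) ⊆ {0} ∪ [γ,∞)`, and `V` is self-adjoint with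
`|⟨ψ,Vψ⟩| ≤ β⟨ψ,H₀ψ⟩`, `β < 1`, `⟨Ω,VΩ⟩ = 0`, then with `E = inf spec(H₀+V)` one has
`spec(H₀+V) ⊆ {E} ∪ [E+(1-β)γ, ∞)` and `E ≤ 0`. -/
theorem spectral_gap_stability
    {H : Type*} [NormedAddCommGroup H] [InnerProductSpace ℂ H] [CompleteSpace H]
    (H₀ V : H →L[ℂ] H) (γ β : ℝ) (Ω : H) (hΩ : ‖Ω‖ = 1)
    (hH₀sa : IsSelfAdjoint H₀)
    (hH₀pos : ∀ ψ : H, 0 ≤ (⟪ψ, H₀ ψ⟫_ℂ).re)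
    (hker : LinearMap.ker (H₀ : H →ₗ[ℂ] H) = Submodule.span ℂ {Ω})
    (hγ : 0 < γ)
    (hspec : spectrum ℂ H₀ ⊆ (fun t : ℝ => (t : ℂ)) '' ({0} ∪ Set.Ici γ))
    (hVsa : IsSelfAdjoint V) (hβ0 : 0 ≤ β) (hβ1 : β < 1)
    (hform : ∀ ψ : H, |(⟪ψ, V ψ⟫_ℂ).re| ≤ β * (⟪ψ, H₀ ψ⟫_ℂ).re)
    (hVΩ : ⟪Ω, V Ω⟫_ℂ = 0)
    (E : ℝ) (hE : E = sInf {t : ℝ | (t : ℂ) ∈ spectrum ℂ (H₀ + V)}) :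
    spectrum ℂ (H₀ + V) ⊆ (fun t : ℝ => (t : ℂ)) '' ({E} ∪ Set.Ici (E + (1 - β) * γ)) ∧
    E ≤ 0 := by
  have hΩne : Ω ≠ 0 := fun h => by simp [h] at hΩ
  haveI : Nontrivial H := ⟨⟨Ω, 0, hΩne⟩⟩
  set T : H →L[ℂ] H := H₀ + V with hTdef
  have hTsa : IsSelfAdjoint T := hH₀sa.add hVsa
  -- real spectrum of H₀
  have hspecR : ∀ t ∈ spectrum ℝ H₀, t = 0 ∨ γ ≤ t := by
    intro t ht
    obtain ⟨s, hs, hst⟩ := hspec ((aux_bridge H₀ hH₀sa t).mpr ht)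
    have hsx : s = t := by simpa [Complex.ofReal_inj] using hst
    subst hsx
    rcases hs with h | h
    · exact Or.inl h
    · exact Or.inr h
  -- identify the set defining E
  have hSset : {t : ℝ | (t : ℂ) ∈ spectrum ℂ T} = spectrum ℝ T := by
    ext t; exact aux_bridge T hTsa t
  rw [hSset] at hE
  -- the real spectrum of T is nonempty, compact
  have hne : (spectrum ℝ T).Nonempty := by
    obtain ⟨z, hz⟩ := spectrum.nonempty T
    have hzre : z = (z.re : ℂ) := hTsa.mem_spectrum_eq_re hz
    exact ⟨z.re, (aux_bridge T hTsa z.re).mp (hzre ▸ hz)⟩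
  have hcpt : IsCompact (spectrum ℝ T) := spectrum.isCompact T
  have hbdd : BddBelow (spectrum ℝ T) := hcpt.bddBelow
  have hEmem : E ∈ spectrum ℝ T := hE ▸ hcpt.sInf_mem hne
  have hElb : ∀ s ∈ spectrum ℝ T, E ≤ s := fun s hs => hE ▸ csInf_le hbdd hs
  -- ⟪Ω, T Ω⟫ = 0
  have hΩker : H₀ Ω = 0 := by
    have : Ω ∈ LinearMap.ker (H₀ : H →ₗ[ℂ] H) := by
      rw [hker]; exact Submodule.mem_span_singleton_self Ω
    exact this
  have hTΩ : ⟪Ω, T Ω⟫_ℂ = 0 := by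
    have : T Ω = H₀ Ω + V Ω := rfl
    rw [this, inner_add_right, hΩker, inner_zero_right, hVΩ, add_zero]
  -- E ≤ 0
  have hE0 : E ≤ 0 := by
    have h1 : (0 : H →L[ℂ] H) ≤ cfc (fun s : ℝ => s - E) T :=
      cfc_nonneg (fun s hs => sub_nonneg.mpr (hElb s hs))
    have h2 : cfc (fun s : ℝ => s - E) T = T - algebraMap ℝ (H →L[ℂ] H) E := by
      rw [cfc_sub (fun s : ℝ => s) (fun _ => E) T (by fun_prop) (by fun_prop),
        cfc_id' ℝ T hTsa, cfc_const E T hTsa]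
    rw [h2] at h1
    have h3 := aux_re_inner_nonneg h1 Ω
    have happ : (T - algebraMap ℝ (H →L[ℂ] H) E) Ω = T Ω - E • Ω := by
      rw [Algebra.algebraMap_eq_smul_one]; rfl
    rw [happ, inner_sub_right, hTΩ] at h3
    have h4 : ⟪Ω, E • Ω⟫_ℂ = (E : ℂ) := by
      rw [← Complex.coe_smul, inner_smul_right, inner_self_eq_norm_sq_to_K, hΩ]
      norm_num
    rw [h4] at h3
    simpa using h3
  refine ⟨?_, hE0⟩
  -- main inclusion
  intro z hz
  have hzre : z = (z.re : ℂ) := hTsa.mem_spectrum_eq_re hz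
  set t : ℝ := z.re with htdef
  have ht : t ∈ spectrum ℝ T := (aux_bridge T hTsa t).mp (hzre ▸ hz)
  set c : ℝ := E + (1 - β) * γ with hcdef
  suffices hsuff : t = E ∨ c ≤ t by
    refine ⟨t, ?_, hzre.symm⟩
    rcases hsuff with h | h
    · exact Or.inl (h ▸ rfl)
    · exact Or.inr h
  by_contra hcon
  push_neg at hcon
  obtain ⟨htE, htc⟩ := hcon
  have htc' : t < c := htc
  have htE' : E < t := lt_of_le_of_ne (hElb t ht) (Ne.symm htE)
  -- the contradiction engine
  have final : ∀ χ : H, χ ≠ 0 → ⟪Ω, χ⟫_ℂ = 0 →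
      (⟪χ, T χ⟫_ℂ).re ≤ ((t + c) / 2) * ‖χ‖ ^ 2 → False := by
    intro χ hχ0 hχΩ hχb
    have hgap := aux_gap H₀ γ Ω hH₀sa hker hγ hspecR χ hχΩ
    have hform' := abs_le.mp (hform χ)
    have hre : (⟪χ, T χ⟫_ℂ).re = (⟪χ, H₀ χ⟫_ℂ).re + (⟪χ, V χ⟫_ℂ).re := by
      have : T χ = H₀ χ + V χ := rfl
      rw [this, inner_add_right, Complex.add_re]
    have hN : 0 < ‖χ‖ ^ 2 := by
      have := norm_pos_iff.mpr hχ0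
      positivity
    have hlc : (t + c) / 2 < (1 - β) * γ := by
      have : c ≤ (1 - β) * γ := by simp [hcdef]; linarith
      linarith
    nlinarith [hH₀pos χ, hform'.1, hgap]
  -- bump functions
  set ε : ℝ := min ((t - E) / 2) ((c - t) / 2) with hεdef
  have hε : 0 < ε := lt_min (by linarith) (by linarith)
  have hε1 : 2 * ε ≤ t - E := by
    have := min_le_left ((t - E) / 2) ((c - t) / 2); rw [← hεdef] at this; linarith
  have hε2 : t + ε < c := by
    have := min_le_right ((t - E) / 2) ((c - t) / 2); rw [← hεdef] at this; linarith
  have hμ : t + ε ≤ (t + c) / 2 := by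
    have h := min_le_right ((t - E) / 2) ((c - t) / 2)
    rw [← hεdef] at h
    linarith
  set f : ℝ → ℝ := fun s => max 0 (1 - |s - E| / ε) with hfdef
  set g : ℝ → ℝ := fun s => max 0 (1 - |s - t| / ε) with hgdef
  have hfc : Continuous f := by fun_prop
  have hgc : Continuous g := by fun_prop
  have hfE : f E = 1 := by simp [hfdef]
  have hgt : g t = 1 := by simp [hgdef]
  have hfnn : ∀ s, 0 ≤ f s := fun s => le_max_left _ _
  have hgnn : ∀ s, 0 ≤ g s := fun s => le_max_left _ _
  have hfsupp : ∀ s, f s ≠ 0 → |s - E| < ε := by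
    intro s h
    by_contra h'
    push_neg at h'
    apply h
    have hle : 1 - |s - E| / ε ≤ 0 := by
      rw [sub_nonpos, le_div_iff₀ hε, one_mul]
      exact h'
    exact max_eq_left hle
  have hgsupp : ∀ s, g s ≠ 0 → |s - t| < ε := by
    intro s h
    by_contra h'
    push_neg at h'
    apply h
    have hle : 1 - |s - t| / ε ≤ 0 := by
      rw [sub_nonpos, le_div_iff₀ hε, one_mul]
      exact h'
    exact max_eq_left hle
  have hfg : ∀ s, f s * g s = 0 := by
    intro s
    by_cases hf0 : f s = 0
    · rw [hf0, zero_mul]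
    by_cases hg0 : g s = 0
    · rw [hg0, mul_zero]
    have h1 := hfsupp s hf0
    have h2 := hgsupp s hg0
    have := abs_sub_abs_le_abs_sub (s - E) (s - t)
    have habs : t - E ≤ |s - E| + |s - t| := by
      have := abs_sub (s - E) (s - t)
      calc t - E = (s - E) - (s - t) := by ring
        _ ≤ |(s - E) - (s - t)| := le_abs_self _
        _ ≤ |s - E| + |s - t| := abs_sub _ _
    linarith
  have hboundf : ∀ s ∈ spectrum ℝ T, f s * s * f s ≤ (t + ε) * (f s * f s) := by
    intro s _
    by_cases hf0 : f s = 0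
    · simp [hf0]
    have h1 := hfsupp s hf0
    have hsle : s ≤ t + ε := by
      have := abs_lt.mp h1
      linarith
    nlinarith [hfnn s, sub_nonneg.mpr hsle]
  have hboundg : ∀ s ∈ spectrum ℝ T, g s * s * g s ≤ (t + ε) * (g s * g s) := by
    intro s _
    by_cases hg0 : g s = 0
    · simp [hg0]
    have h1 := hgsupp s hg0
    have hsle : s ≤ t + ε := by
      have := abs_lt.mp h1
      linarith
    nlinarith [hgnn s, sub_nonneg.mpr hsle]
  -- projections-like elements
  set P : H →L[ℂ] H := cfc f T with hPdef
  set Q : H →L[ℂ] H := cfc g T with hQdef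
  have hPsa : IsSelfAdjoint P := cfc_predicate f T
  have hQsa : IsSelfAdjoint Q := cfc_predicate g T
  have hPQ : P * Q = 0 := by
    rw [hPdef, hQdef, ← cfc_mul f g T hfc.continuousOn hgc.continuousOn]
    have hz : cfc (fun s => f s * g s) T = cfc (fun _ : ℝ => (0 : ℝ)) T :=
      cfc_congr (fun s _ => hfg s)
    rw [hz]
    exact cfc_const_zero ℝ T
  have hPTQ : P * (T * Q) = 0 := by
    have h2 : T * Q = cfc (fun s => s * g s) T := by
      rw [cfc_mul (fun s : ℝ => s) g T (by fun_prop) hgc.continuousOn, cfc_id' ℝ T hTsa]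
    rw [hPdef, h2, ← cfc_mul f (fun s => s * g s) T hfc.continuousOn
      (by exact (continuous_id.mul hgc).continuousOn)]
    have hz : cfc (fun s => f s * (s * g s)) T = cfc (fun _ : ℝ => (0 : ℝ)) T := by
      apply cfc_congr
      intro s _
      calc f s * (s * g s) = s * (f s * g s) := by ring
        _ = 0 := by rw [hfg s, mul_zero]
    rw [hz]
    exact cfc_const_zero ℝ T
  have hQTP : Q * (T * P) = 0 := by
    have h2 : T * P = cfc (fun s => s * f s) T := by
      rw [cfc_mul (fun s : ℝ => s) f T (by fun_prop) hfc.continuousOn, cfc_id' ℝ T hTsa]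
    rw [hQdef, h2, ← cfc_mul g (fun s => s * f s) T hgc.continuousOn
      (by exact (continuous_id.mul hfc).continuousOn)]
    have hz : cfc (fun s => g s * (s * f s)) T = cfc (fun _ : ℝ => (0 : ℝ)) T := by
      apply cfc_congr
      intro s _
      calc g s * (s * f s) = s * (f s * g s) := by ring
        _ = 0 := by rw [hfg s, mul_zero]
    rw [hz]
    exact cfc_const_zero ℝ T
  -- P and Q are nonzero
  have hPne : P ≠ 0 := by
    intro h0
    have h1 : (1 : ℝ) ∈ spectrum ℝ P := by
      rw [hPdef, cfc_map_spectrum f T hTsa hfc.continuousOn]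
      exact ⟨E, hEmem, hfE⟩
    rw [h0, spectrum.zero_eq] at h1
    simp at h1
  have hQne : Q ≠ 0 := by
    intro h0
    have h1 : (1 : ℝ) ∈ spectrum ℝ Q := by
      rw [hQdef, cfc_map_spectrum g T hTsa hgc.continuousOn]
      exact ⟨t, ht, hgt⟩
    rw [h0, spectrum.zero_eq] at h1
    simp at h1
  obtain ⟨χ₁, hχ₁⟩ : ∃ x, P x ≠ 0 := by
    by_contra h
    push_neg at h
    exact hPne (ContinuousLinearMap.ext fun x => by simp [h x])
  obtain ⟨χ₂, hχ₂⟩ : ∃ x, Q x ≠ 0 := by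
    by_contra h
    push_neg at h
    exact hQne (ContinuousLinearMap.ext fun x => by simp [h x])
  set ψ₁ : H := P χ₁ with hψ₁def
  set ψ₂ : H := Q χ₂ with hψ₂def
  -- orthogonality relations
  have horth : ⟪ψ₁, ψ₂⟫_ℂ = 0 := by
    rw [hψ₁def, hψ₂def, aux_symm hPsa]
    have : P (Q χ₂) = (P * Q) χ₂ := rfl
    rw [this, hPQ]
    simp
  have hT12 : ⟪ψ₁, T ψ₂⟫_ℂ = 0 := by
    rw [hψ₁def, hψ₂def, aux_symm hPsa]
    have : P (T (Q χ₂)) = (P * (T * Q)) χ₂ := rfl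
    rw [this, hPTQ]
    simp
  have hT21 : ⟪ψ₂, T ψ₁⟫_ℂ = 0 := by
    rw [hψ₁def, hψ₂def, aux_symm hQsa]
    have : Q (T (P χ₁)) = (Q * (T * P)) χ₁ := rfl
    rw [this, hQTP]
    simp
  -- Rayleigh bounds
  have hx : (⟪ψ₁, T ψ₁⟫_ℂ).re ≤ (t + ε) * ‖ψ₁‖ ^ 2 :=
    aux_rayleigh T hTsa f hfc (t + ε) hboundf χ₁
  have hy : (⟪ψ₂, T ψ₂⟫_ℂ).re ≤ (t + ε) * ‖ψ₂‖ ^ 2 :=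
    aux_rayleigh T hTsa g hgc (t + ε) hboundg χ₂
  have hx' : (⟪ψ₁, T ψ₁⟫_ℂ).re ≤ ((t + c) / 2) * ‖ψ₁‖ ^ 2 := by
    have : (t + ε) * ‖ψ₁‖ ^ 2 ≤ ((t + c) / 2) * ‖ψ₁‖ ^ 2 := by
      apply mul_le_mul_of_nonneg_right hμ (by positivity)
    linarith
  have hy' : (⟪ψ₂, T ψ₂⟫_ℂ).re ≤ ((t + c) / 2) * ‖ψ₂‖ ^ 2 := by
    have : (t + ε) * ‖ψ₂‖ ^ 2 ≤ ((t + c) / 2) * ‖ψ₂‖ ^ 2 := by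
      apply mul_le_mul_of_nonneg_right hμ (by positivity)
    linarith
  -- construct a vector orthogonal to Ω
  by_cases hcase : ⟪Ω, ψ₁⟫_ℂ = 0
  · exact final ψ₁ hχ₁ hcase hx'
  · set a : ℂ := ⟪Ω, ψ₂⟫_ℂ with hadef
    set b : ℂ := -⟪Ω, ψ₁⟫_ℂ with hbdef
    have hbne : b ≠ 0 := by
      rw [hbdef]; exact neg_ne_zero.mpr hcase
    set χ : H := a • ψ₁ + b • ψ₂ with hχdef
    have hχΩ : ⟪Ω, χ⟫_ℂ = 0 := by
      rw [hχdef, inner_add_right, inner_smul_right, inner_smul_right, hadef, hbdef]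
      ring
    have hχ0 : χ ≠ 0 := by
      intro h0
      have h1 : ⟪ψ₂, χ⟫_ℂ = b * ⟪ψ₂, ψ₂⟫_ℂ := by
        rw [hχdef, inner_add_right, inner_smul_right, inner_smul_right]
        have : ⟪ψ₂, ψ₁⟫_ℂ = 0 := by
          rw [← inner_conj_symm, horth, map_zero]
        rw [this]; ring
      rw [h0, inner_zero_right] at h1
      have h2 : ⟪ψ₂, ψ₂⟫_ℂ = 0 := by
        rcases mul_eq_zero.mp h1.symm with h | h
        · exact absurd h hbne
        · exact h
      exact hχ₂ (inner_self_eq_zero.mp h2)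
    exact final χ hχ0 hχΩ (aux_combo T ψ₁ ψ₂ ((t + c) / 2) horth hT12 hT21 hx' hy' a b)
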